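/- Let G be a nonzero real number and let B_G be the monopole field on ℝ³ \ {0}, defined by B_G(x) = G • x / ‖x‖³. Then there is no continuously differentiable vector field A : ℝ³ \ {0} → ℝ³ whose curl equals B_G at every point of ℝ³ \ {0}; i.e., the monopole field admits no global smooth vector potential on the punctured space. -/

import Mathlib

noncomputable section

/-- The `i`-th partial derivative (Fréchet derivative applied to the `i`-th standard basis
vector) of the `j`-th component of a vector field on `ℝ³`. -/
def pderiv3 (A : EuclideanSpace ℝ (Fin 3) → EuclideanSpace ℝ (Fin 3))
    (i j : Fin 3) (x : EuclideanSpace ℝ (Fin 3)) : ℝ :=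
  fderiv ℝ (fun y => A y j) x (EuclideanSpace.single i 1)

/-- The curl `(∂₂A₃ − ∂₃A₂, ∂₃A₁ − ∂₁A₃, ∂₁A₂ − ∂₂A₁)` of a vector field on `ℝ³`. -/
def curl (A : EuclideanSpace ℝ (Fin 3) → EuclideanSpace ℝ (Fin 3))
    (x : EuclideanSpace ℝ (Fin 3)) : EuclideanSpace ℝ (Fin 3) :=
  (WithLp.equiv 2 (Fin 3 → ℝ)).symm
    ![pderiv3 A 1 2 x - pderiv3 A 2 1 x,
      pderiv3 A 2 0 x - pderiv3 A 0 2 x,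
      pderiv3 A 0 1 x - pderiv3 A 1 0 x]

/-- The monopole field `B_G(x) = G • x / ‖x‖³`. -/
def monopoleField (G : ℝ) (x : EuclideanSpace ℝ (Fin 3)) : EuclideanSpace ℝ (Fin 3) :=
  (‖x‖ ^ 3)⁻¹ • (G • x)

open Real
abbrev E3 : Type := EuclideanSpace ℝ (Fin 3)
def ee (i : Fin 3) : E3 := EuclideanSpace.single i 1

def sph (t s : ℝ) : E3 := (sin t * cos s) • ee 0 + (sin t * sin s) • ee 1 + cos t • ee 2
def sphT (t s : ℝ) : E3 := (cos t * cos s) • ee 0 + (cos t * sin s) • ee 1 + (-sin t) • ee 2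
def sphS (t s : ℝ) : E3 := (sin t * -sin s) • ee 0 + (sin t * cos s) • ee 1
def sphTS (t s : ℝ) : E3 := (cos t * -sin s) • ee 0 + (cos t * cos s) • ee 1

@[simp] lemma sph_apply0 (t s : ℝ) : sph t s 0 = sin t * cos s := by
  simp [sph, ee, EuclideanSpace.single_apply, PiLp.add_apply, PiLp.smul_apply]
@[simp] lemma sph_apply1 (t s : ℝ) : sph t s 1 = sin t * sin s := by
  simp [sph, ee, EuclideanSpace.single_apply, PiLp.add_apply, PiLp.smul_apply]
@[simp] lemma sph_apply2 (t s : ℝ) : sph t s 2 = cos t := by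
  simp [sph, ee, EuclideanSpace.single_apply, PiLp.add_apply, PiLp.smul_apply]

lemma norm_sph (t s : ℝ) : ‖sph t s‖ = 1 := by
  have h : ∑ i : Fin 3, ‖sph t s i‖ ^ 2 = 1 := by
    rw [Fin.sum_univ_three]
    simp only [sph_apply0, sph_apply1, sph_apply2, Real.norm_eq_abs, sq_abs]
    linear_combination (sin t)^2 * (sin_sq_add_cos_sq s) + (sin_sq_add_cos_sq t)
  rw [EuclideanSpace.norm_eq, h, Real.sqrt_one]

lemma hasDerivAt_sph_left (s t : ℝ) : HasDerivAt (fun t' => sph t' s) (sphT t s) t :=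
  ((((Real.hasDerivAt_sin t).mul_const _).smul_const (ee 0)).add
    (((Real.hasDerivAt_sin t).mul_const _).smul_const (ee 1))).add
    ((Real.hasDerivAt_cos t).smul_const (ee 2))

lemma hasDerivAt_sph_right (t s : ℝ) : HasDerivAt (fun s' => sph t s') (sphS t s) s :=
  ((((Real.hasDerivAt_cos s).const_mul (sin t)).smul_const (ee 0)).add
    (((Real.hasDerivAt_sin s).const_mul (sin t)).smul_const (ee 1))).add_const _

lemma hasDerivAt_sphS_left (s t : ℝ) : HasDerivAt (fun t' => sphS t' s) (sphTS t s) t :=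
  (((Real.hasDerivAt_sin t).mul_const _).smul_const (ee 0)).add
    (((Real.hasDerivAt_sin t).mul_const _).smul_const (ee 1))

lemma hasDerivAt_sphT_right (t s : ℝ) : HasDerivAt (fun s' => sphT t s') (sphTS t s) s :=
  ((((Real.hasDerivAt_cos s).const_mul (cos t)).smul_const (ee 0)).add
    (((Real.hasDerivAt_sin s).const_mul (cos t)).smul_const (ee 1))).add_const _


variable (A : E3 → E3)

lemma hasFDerivAt_A (hA : ContDiffOn ℝ 1 A ({0}ᶜ : Set E3)) {x : E3} (hx : x ≠ 0) : HasFDerivAt A (fderiv ℝ A x) x := by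
  have hopen : IsOpen ({0}ᶜ : Set E3) := isOpen_compl_singleton
  exact ((hA.differentiableOn one_ne_zero).differentiableAt
    (hopen.mem_nhds (by simpa using hx))).hasFDerivAt

lemma pderiv3_eq (hA : ContDiffOn ℝ 1 A ({0}ᶜ : Set E3)) {x : E3} (hx : x ≠ 0) (i j : Fin 3) :
    pderiv3 A i j x = fderiv ℝ A x (ee i) j := by
  have h := hasFDerivAt_A A hA hx
  have hj : HasFDerivAt (fun y => A y j)
      ((EuclideanSpace.proj j : E3 →L[ℝ] ℝ).comp (fderiv ℝ A x)) x := by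
    have hj' := (EuclideanSpace.proj j : E3 →L[ℝ] ℝ).hasFDerivAt.comp x h
    exact hj'
  rw [pderiv3, hj.fderiv]
  rfl

@[simp] lemma sphT_apply0 (t s : ℝ) : sphT t s 0 = cos t * cos s := by
  simp [sphT, ee, EuclideanSpace.single_apply, PiLp.add_apply, PiLp.smul_apply]
@[simp] lemma sphT_apply1 (t s : ℝ) : sphT t s 1 = cos t * sin s := by
  simp [sphT, ee, EuclideanSpace.single_apply, PiLp.add_apply, PiLp.smul_apply]
@[simp] lemma sphT_apply2 (t s : ℝ) : sphT t s 2 = -sin t := by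
  simp [sphT, ee, EuclideanSpace.single_apply, PiLp.add_apply, PiLp.smul_apply]
@[simp] lemma sphS_apply0 (t s : ℝ) : sphS t s 0 = sin t * -sin s := by
  simp [sphS, ee, EuclideanSpace.single_apply, PiLp.add_apply, PiLp.smul_apply]
@[simp] lemma sphS_apply1 (t s : ℝ) : sphS t s 1 = sin t * cos s := by
  simp [sphS, ee, EuclideanSpace.single_apply, PiLp.add_apply, PiLp.smul_apply]
@[simp] lemma sphS_apply2 (t s : ℝ) : sphS t s 2 = 0 := by
  simp [sphS, ee, EuclideanSpace.single_apply, PiLp.add_apply, PiLp.smul_apply]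
@[simp] lemma sphTS_apply0 (t s : ℝ) : sphTS t s 0 = cos t * -sin s := by
  simp [sphTS, ee, EuclideanSpace.single_apply, PiLp.add_apply, PiLp.smul_apply]
@[simp] lemma sphTS_apply1 (t s : ℝ) : sphTS t s 1 = cos t * cos s := by
  simp [sphTS, ee, EuclideanSpace.single_apply, PiLp.add_apply, PiLp.smul_apply]
@[simp] lemma sphTS_apply2 (t s : ℝ) : sphTS t s 2 = 0 := by
  simp [sphTS, ee, EuclideanSpace.single_apply, PiLp.add_apply, PiLp.smul_apply]

lemma sph_ne (t s : ℝ) : sph t s ≠ 0 := by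
  intro h
  have := norm_sph t s
  rw [h] at this
  simp at this

def Pf (t s : ℝ) : ℝ := inner (𝕜 := ℝ) (A (sph t s)) (sphS t s)
def Qf (t s : ℝ) : ℝ := inner (𝕜 := ℝ) (A (sph t s)) (sphT t s)
def pf (t s : ℝ) : ℝ := inner (𝕜 := ℝ) (A (sph t s)) (sphTS t s)
  + inner (𝕜 := ℝ) (fderiv ℝ A (sph t s) (sphT t s)) (sphS t s)
def qf (t s : ℝ) : ℝ := inner (𝕜 := ℝ) (A (sph t s)) (sphTS t s)
  + inner (𝕜 := ℝ) (fderiv ℝ A (sph t s) (sphS t s)) (sphT t s)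

lemma hasDerivAt_Pf (hA : ContDiffOn ℝ 1 A ({0}ᶜ : Set E3)) (s t : ℝ) :
    HasDerivAt (fun t' => Pf A t' s) (pf A t s) t := by
  have h1 : HasDerivAt (fun t' => A (sph t' s)) (fderiv ℝ A (sph t s) (sphT t s)) t :=
    (hasFDerivAt_A A hA (sph_ne t s)).comp_hasDerivAt t (hasDerivAt_sph_left s t)
  exact HasDerivAt.inner ℝ h1 (hasDerivAt_sphS_left s t)

lemma hasDerivAt_Qf (hA : ContDiffOn ℝ 1 A ({0}ᶜ : Set E3)) (t s : ℝ) :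
    HasDerivAt (fun s' => Qf A t s') (qf A t s) s := by
  have h1 : HasDerivAt (fun s' => A (sph t s')) (fderiv ℝ A (sph t s) (sphS t s)) s :=
    (hasFDerivAt_A A hA (sph_ne t s)).comp_hasDerivAt s (hasDerivAt_sph_right t s)
  exact HasDerivAt.inner ℝ h1 (hasDerivAt_sphT_right t s)

lemma key {G : ℝ} (hA : ContDiffOn ℝ 1 A ({0}ᶜ : Set E3))
    (hcurl : ∀ x : E3, x ≠ 0 → curl A x = monopoleField G x) (t s : ℝ) :
    pf A t s - qf A t s = G * sin t := by
  have hx := sph_ne t s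
  have hc := hcurl _ hx
  have hm : monopoleField G (sph t s) = G • sph t s := by
    rw [monopoleField, norm_sph]; simp
  rw [hm] at hc
  have h0 := congrArg (· 0) hc
  have h1 := congrArg (· 1) hc
  have h2 := congrArg (· 2) hc
  simp only [curl, WithLp.equiv_symm_apply, PiLp.toLp_apply, Matrix.cons_val_zero, Matrix.cons_val_one,
    Matrix.head_cons, Matrix.cons_val_two, Matrix.tail_cons, PiLp.smul_apply, smul_eq_mul,
    pderiv3_eq A hA hx, sph_apply0, sph_apply1, sph_apply2] at h0 h1 h2
  set L := fderiv ℝ A (sph t s) with hL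
  rw [pf, qf]
  have expandT : L (sphT t s) = (cos t * cos s) • L (ee 0) + (cos t * sin s) • L (ee 1)
      + (-sin t) • L (ee 2) := by
    rw [sphT]; simp [map_add, map_smul]
  have expandS : L (sphS t s) = (sin t * -sin s) • L (ee 0) + (sin t * cos s) • L (ee 1) := by
    rw [sphS]; simp [map_add, map_smul]
  rw [expandT, expandS]
  simp only [PiLp.inner_apply, RCLike.inner_apply, conj_trivial, Fin.sum_univ_three,
    PiLp.add_apply, PiLp.smul_apply, smul_eq_mul]
  simp only [sphS_apply0, sphS_apply1, sphS_apply2, sphT_apply0, sphT_apply1, sphT_apply2,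
    sphTS_apply0, sphTS_apply1, sphTS_apply2]
  linear_combination (sin t^2 * cos s) * h0 + (sin t^2 * sin s) * h1 + (sin t * cos t) * h2
    + (G * sin t * sin t^2) * (sin_sq_add_cos_sq s) + (G * sin t) * (sin_sq_add_cos_sq t)
    + (cos t * sin t * (L (ee 0) 1 - L (ee 1) 0)) * (sin_sq_add_cos_sq s)

lemma cont_sph : Continuous (fun z : ℝ × ℝ => sph z.1 z.2) := by unfold sph; fun_prop
lemma cont_sphT : Continuous (fun z : ℝ × ℝ => sphT z.1 z.2) := by unfold sphT; fun_prop
lemma cont_sphS : Continuous (fun z : ℝ × ℝ => sphS z.1 z.2) := by unfold sphS; fun_prop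
lemma cont_sphTS : Continuous (fun z : ℝ × ℝ => sphTS z.1 z.2) := by unfold sphTS; fun_prop

lemma cont_aux (hA : ContDiffOn ℝ 1 A ({0}ᶜ : Set E3)) :
    Continuous (fun z : ℝ × ℝ => A (sph z.1 z.2)) ∧
    Continuous (fun z : ℝ × ℝ => fderiv ℝ A (sph z.1 z.2)) := by
  constructor
  · exact hA.continuousOn.comp_continuous cont_sph (fun z => by simpa using sph_ne z.1 z.2)
  · exact (hA.continuousOn_fderiv_of_isOpen isOpen_compl_singleton le_rfl).comp_continuous
      cont_sph (fun z => by simpa using sph_ne z.1 z.2)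

lemma cont_pf (hA : ContDiffOn ℝ 1 A ({0}ᶜ : Set E3)) :
    Continuous (fun z : ℝ × ℝ => pf A z.1 z.2) := by
  obtain ⟨hAc, hDc⟩ := cont_aux A hA
  unfold pf
  exact (hAc.inner cont_sphTS).add ((hDc.clm_apply cont_sphT).inner cont_sphS)

lemma cont_qf (hA : ContDiffOn ℝ 1 A ({0}ᶜ : Set E3)) :
    Continuous (fun z : ℝ × ℝ => qf A z.1 z.2) := by
  obtain ⟨hAc, hDc⟩ := cont_aux A hA
  unfold qf
  exact (hAc.inner cont_sphTS).add ((hDc.clm_apply cont_sphS).inner cont_sphT)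

lemma Pf_pi (s : ℝ) : Pf A π s = 0 := by
  have : sphS π s = 0 := by rw [sphS]; simp [Real.sin_pi]
  rw [Pf, this, inner_zero_right]

lemma Pf_zero (s : ℝ) : Pf A 0 s = 0 := by
  have : sphS 0 s = 0 := by rw [sphS]; simp
  rw [Pf, this, inner_zero_right]

lemma Qf_periodic (t : ℝ) : Qf A t (2 * π) = Qf A t 0 := by
  have h1 : sph t (2 * π) = sph t 0 := by
    rw [sph, sph]; simp [Real.sin_two_pi, Real.cos_two_pi]
  have h2 : sphT t (2 * π) = sphT t 0 := by
    rw [sphT, sphT]; simp [Real.sin_two_pi, Real.cos_two_pi]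
  rw [Qf, Qf, h1, h2]


/-- For `G ≠ 0`, the monopole field admits no global `C¹` vector potential on `ℝ³ \ {0}`. -/
theorem monopole_has_no_global_potential (G : ℝ) (hG : G ≠ 0) :
    ¬ ∃ A : EuclideanSpace ℝ (Fin 3) → EuclideanSpace ℝ (Fin 3),
        ContDiffOn ℝ 1 A ({0}ᶜ : Set (EuclideanSpace ℝ (Fin 3))) ∧
        ∀ x : EuclideanSpace ℝ (Fin 3), x ≠ 0 → curl A x = monopoleField G x := by
  rintro ⟨A, hA, hcurl⟩
  have hπ : (0:ℝ) ≤ π := pi_pos.le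
  have h2π : (0:ℝ) ≤ 2 * π := by positivity
  -- inner integral of qf vanishes by periodicity
  have qzero : ∀ t : ℝ, (∫ s in (0:ℝ)..2*π, qf A t s) = 0 := by
    intro t
    have hint : IntervalIntegrable (fun s => qf A t s) MeasureTheory.volume 0 (2*π) :=
      ((cont_qf A hA).comp (Continuous.prodMk_right t)).intervalIntegrable 0 (2*π)
    rw [intervalIntegral.integral_eq_sub_of_hasDerivAt
      (fun s _ => hasDerivAt_Qf A hA t s) hint, Qf_periodic, sub_self]
  -- hence inner integral of pf equals 2π G sin t
  have pint : ∀ t : ℝ, (∫ s in (0:ℝ)..2*π, pf A t s) = 2 * π * (G * sin t) := by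
    intro t
    have hqint : IntervalIntegrable (fun s => qf A t s) MeasureTheory.volume 0 (2*π) :=
      ((cont_qf A hA).comp (Continuous.prodMk_right t)).intervalIntegrable 0 (2*π)
    have hps : (fun s => pf A t s) = fun s => qf A t s + G * sin t := by
      funext s
      linarith [key A hA hcurl t s]
    rw [hps, intervalIntegral.integral_add hqint intervalIntegrable_const, qzero,
      intervalIntegral.integral_const]
    simp
  -- for fixed s, the t-integral of pf vanishes by FTC
  have pzero : ∀ s : ℝ, (∫ t in (0:ℝ)..π, pf A t s) = 0 := by
    intro s
    have hint : IntervalIntegrable (fun t => pf A t s) MeasureTheory.volume 0 π :=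
      ((cont_pf A hA).comp (continuous_id.prodMk continuous_const)).intervalIntegrable 0 π
    rw [intervalIntegral.integral_eq_sub_of_hasDerivAt
      (fun t _ => hasDerivAt_Pf A hA s t) hint, Pf_pi, Pf_zero, sub_self]
  -- Fubini
  have swap : (∫ t in (0:ℝ)..π, ∫ s in (0:ℝ)..2*π, pf A t s)
      = ∫ s in (0:ℝ)..2*π, ∫ t in (0:ℝ)..π, pf A t s := by
    rw [intervalIntegral.integral_of_le hπ, intervalIntegral.integral_of_le h2π]
    simp_rw [intervalIntegral.integral_of_le hπ, intervalIntegral.integral_of_le h2π]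
    apply MeasureTheory.integral_integral_swap
    rw [MeasureTheory.Measure.prod_restrict]
    have hint : MeasureTheory.IntegrableOn (fun z : ℝ × ℝ => pf A z.1 z.2)
        (Set.Icc 0 π ×ˢ Set.Icc 0 (2*π)) (MeasureTheory.volume.prod MeasureTheory.volume) := by
      rw [← MeasureTheory.Measure.volume_eq_prod]
      exact (cont_pf A hA).continuousOn.integrableOn_compact (isCompact_Icc.prod isCompact_Icc)
    exact hint.mono_set (Set.prod_mono Set.Ioc_subset_Icc_self Set.Ioc_subset_Icc_self)
  have lhs : (∫ t in (0:ℝ)..π, ∫ s in (0:ℝ)..2*π, pf A t s) = 2 * π * G * 2 := by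
    simp only [pint]
    have : (fun t : ℝ => 2 * π * (G * sin t)) = fun t : ℝ => (2 * π * G) * sin t := by
      funext t; ring
    rw [this, intervalIntegral.integral_const_mul, integral_sin]
    norm_num [Real.cos_pi]
  have rhs : (∫ s in (0:ℝ)..2*π, ∫ t in (0:ℝ)..π, pf A t s) = 0 := by
    simp only [pzero]
    simp
  rw [swap, rhs] at lhs
  have h4 : (2 * π * G * 2 : ℝ) = (4 * π) * G := by ring
  rw [h4] at lhs
  rcases mul_eq_zero.mp lhs.symm with h | h
  · have := Real.pi_ne_zero
    apply this
    linarith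
  · exact hG h
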